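/- arXiv:2402.05324 — 2 statements merged into one kernel-verified Lean document; each statement's English description precedes it below -/
import Mathlib

section
/- Let φ be an admissible function with upper exponent β. Then for every real number x and every q₀ with 1 ≤ q₀ < ∞: if x ≥ 0 then inf_{q ∈ [q₀,∞)} φ(q)e^{−x/q} ≤ φ(q₀)e^{−x/q₀}, and if x < 0 then inf_{q ∈ [q₀,∞)} φ(q)e^{−x/q} ≤ q₀^β e^{1/q₀} φ(1 − x). -/
open MeasureTheory Set ENNReal

/-- The decreasing rearrangement of `f` with respect to the measure `μ`:
`f*_μ(t) = inf {y > 0 : μ({x : |f x| > y}) ≤ t}`. -/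
noncomputable def rearr {α : Type*} [MeasurableSpace α] (μ : Measure α)
    (f : α → ℝ) (t : ℝ) : ℝ :=
  sInf {y : ℝ | 0 < y ∧ μ {x | y < |f x|} ≤ ENNReal.ofReal t}

/-- `T` is sublinear: `|T(f+g)| ≤ |Tf| + |Tg|` and `|T(cf)| = |c||Tf|`, `ν`-a.e. -/
def Sublinear {α β : Type*} [MeasurableSpace β] (ν : Measure β)
    (T : (α → ℝ) → (β → ℝ)) : Prop :=
  (∀ f g : α → ℝ, ∀ᵐ x ∂ν, |T (f + g) x| ≤ |T f x| + |T g x|) ∧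
  (∀ (c : ℝ) (f : α → ℝ), ∀ᵐ x ∂ν, |T (c • f) x| = |c| * |T f x|)

/-- `φ : [1,∞) → [1,∞)` is admissible with exponents `γ, β`:
`φ(1) = 1`, `φ ≥ 1`, `φ` is log-concave and differentiable on `[1,∞)`, and
`γ/x ≤ φ'(x)/φ(x) ≤ β/x` for all `x ≥ 1`. -/
structure IsAdmissible (φ : ℝ → ℝ) (γ β : ℝ) : Prop where
  one : φ 1 = 1
  ge_one : ∀ x : ℝ, 1 ≤ x → 1 ≤ φ x
  logConcave : ∀ x y θ : ℝ, 1 ≤ x → 1 ≤ y → 0 ≤ θ → θ ≤ 1 →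
    θ * Real.log (φ x) + (1 - θ) * Real.log (φ y) ≤
      Real.log (φ (θ * x + (1 - θ) * y))
  gamma_pos : 0 < γ
  beta_pos : 0 < β
  deriv_bound : ∃ D : ℝ → ℝ, ∀ x : ℝ, 1 ≤ x →
    HasDerivWithinAt φ (D x) (Set.Ici 1) x ∧
      γ / x ≤ D x / φ x ∧ D x / φ x ≤ β / x

/-- The Lorentz norm `‖f‖_{L^{p,1}(μ)} = ∫₀^∞ t^{1/p−1} f*_μ(t) dt`. -/
noncomputable def lorentz1 {α : Type*} [MeasurableSpace α] (μ : Measure α)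
    (p : ℝ) (f : α → ℝ) : ℝ≥0∞ :=
  ∫⁻ t in Set.Ioi (0:ℝ), ENNReal.ofReal (t ^ (1/p - 1) * rearr μ f t)

/-- The Lorentz norm `‖f‖_{L^{p,∞}(μ)} = sup_{t>0} t^{1/p} f*_μ(t)`. -/
noncomputable def lorentzInf {α : Type*} [MeasurableSpace α] (μ : Measure α)
    (p : ℝ) (f : α → ℝ) : ℝ≥0∞ :=
  ⨆ t ∈ Set.Ioi (0:ℝ), ENNReal.ofReal (t ^ (1/p) * rearr μ f t)

/-- The Calderón-type operator `R_{p₀,p₁,φ}` written in terms of the reciprocal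
exponents `a = 1/p₀`, `b = 1/p₁`:
`R f(t) = t^{-a} ∫₀^t φ(1 − log(s/t)) f(s) s^{a−1} ds + t^{-b} ∫_t^∞ f(s) s^{b−1} ds`. -/
noncomputable def calderonR (a b : ℝ) (φ : ℝ → ℝ) (f : ℝ → ℝ≥0∞) (t : ℝ) : ℝ≥0∞ :=
  ENNReal.ofReal (t ^ (-a)) * ∫⁻ s in Set.Ioo (0:ℝ) t,
      ENNReal.ofReal (φ (1 - Real.log (s / t)) * s ^ (a - 1)) * f s +
  ENNReal.ofReal (t ^ (-b)) * ∫⁻ s in Set.Ioi t,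
      ENNReal.ofReal (s ^ (b - 1)) * f s

/-- Iterated logarithms: `logk 1 x = 1 + log⁺ x`, `logk (k+1) x = logk 1 (logk k x)`. -/
noncomputable def logk : ℕ → ℝ → ℝ
  | 0, x => x
  | n + 1, x => 1 + max (Real.log (logk n x)) 0

lemma admissible_mul_le (φ : ℝ → ℝ) (γ β : ℝ) (hφ : IsAdmissible φ γ β)
    (c s : ℝ) (hc : 1 ≤ c) (hs : 1 ≤ s) : φ (c * s) ≤ c ^ β * φ s := by
  obtain ⟨D, hD⟩ := hφ.deriv_bound
  have hφpos : ∀ t : ℝ, 1 ≤ t → 0 < φ t := fun t ht =>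
    lt_of_lt_of_le one_pos (hφ.ge_one t ht)
  set h : ℝ → ℝ := fun t => Real.log (φ t) - β * Real.log t with hh
  have hcontφ : ContinuousOn φ (Set.Ici 1) := fun t ht =>
    ((hD t ht).1.continuousWithinAt)
  have hconth : ContinuousOn h (Set.Ici (1:ℝ)) := by
    apply ContinuousOn.sub
    · exact ContinuousOn.log hcontφ fun t ht => (hφpos t ht).ne'
    · exact ContinuousOn.mul continuousOn_const
        (ContinuousOn.log continuousOn_id fun t ht =>
          (lt_of_lt_of_le one_pos ht).ne')
  have hanti : AntitoneOn h (Set.Ici (1:ℝ)) := by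
    apply antitoneOn_of_hasDerivWithinAt_nonpos (convex_Ici 1) hconth
      (f' := fun t => D t / φ t - β * t⁻¹)
    · intro t ht
      rw [interior_Ici] at ht ⊢
      have ht1 : (1:ℝ) ≤ t := le_of_lt ht
      have hφ' : HasDerivWithinAt φ (D t) (Set.Ioi 1) t :=
        (hD t ht1).1.mono (Set.Ioi_subset_Ici le_rfl)
      have hlogφ : HasDerivWithinAt (fun u => Real.log (φ u)) ((φ t)⁻¹ * D t)
          (Set.Ioi 1) t :=
        (Real.hasDerivAt_log (hφpos t ht1).ne').comp_hasDerivWithinAt t hφ'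
      have hlogt : HasDerivWithinAt (fun u : ℝ => β * Real.log u) (β * t⁻¹)
          (Set.Ioi 1) t :=
        ((Real.hasDerivAt_log (lt_of_lt_of_le one_pos ht1).ne').hasDerivWithinAt).const_mul β
      have := hlogφ.sub hlogt
      have e : D t / φ t - β * t⁻¹ = (φ t)⁻¹ * D t - β * t⁻¹ := by rw [div_eq_inv_mul]
      rw [e]
      exact this
    · intro t ht
      rw [interior_Ici] at ht
      have ht1 : (1:ℝ) ≤ t := le_of_lt ht
      have := (hD t ht1).2.2
      have hβ : β / t = β * t⁻¹ := by ring
      linarith [hβ ▸ this]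
  have hcs : (1:ℝ) ≤ c * s := hs.trans (le_mul_of_one_le_left (le_trans zero_le_one hs) hc)
  have key : h (c * s) ≤ h s := hanti (Set.mem_Ici.2 hs) (Set.mem_Ici.2 hcs)
    (le_mul_of_one_le_left (le_trans zero_le_one hs) hc)
  have hcpos : (0:ℝ) < c := lt_of_lt_of_le one_pos hc
  have hspos : (0:ℝ) < s := lt_of_lt_of_le one_pos hs
  have hlog : Real.log (φ (c * s)) ≤ β * Real.log c + Real.log (φ s) := by
    have : Real.log (c * s) = Real.log c + Real.log s :=
      Real.log_mul hcpos.ne' hspos.ne'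
    simp only [hh] at key
    rw [this] at key
    linarith
  calc φ (c * s) = Real.exp (Real.log (φ (c * s))) :=
        (Real.exp_log (hφpos _ hcs)).symm
    _ ≤ Real.exp (β * Real.log c + Real.log (φ s)) := Real.exp_le_exp.2 hlog
    _ = c ^ β * φ s := by
        rw [Real.exp_add, Real.exp_log (hφpos s hs),
          Real.rpow_def_of_pos hcpos, mul_comm β]

/-- For an admissible `φ` with upper exponent `β`, any `x ∈ ℝ` and `q₀ ≥ 1`:
if `x ≥ 0` then `inf_{q ≥ q₀} φ(q) e^{−x/q} ≤ φ(q₀) e^{−x/q₀}`, and if `x < 0` then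
`inf_{q ≥ q₀} φ(q) e^{−x/q} ≤ q₀^β e^{1/q₀} φ(1 − x)`. -/
theorem stmt3 (φ : ℝ → ℝ) (γ β : ℝ) (hφ : IsAdmissible φ γ β)
    (x q₀ : ℝ) (hq₀ : 1 ≤ q₀) :
    (0 ≤ x →
      sInf {z : ℝ | ∃ q : ℝ, q₀ ≤ q ∧ z = φ q * Real.exp (-x / q)} ≤
        φ q₀ * Real.exp (-x / q₀)) ∧
    (x < 0 →
      sInf {z : ℝ | ∃ q : ℝ, q₀ ≤ q ∧ z = φ q * Real.exp (-x / q)} ≤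
        q₀ ^ β * Real.exp (1 / q₀) * φ (1 - x)) := by
  have hbdd : BddBelow {z : ℝ | ∃ q : ℝ, q₀ ≤ q ∧ z = φ q * Real.exp (-x / q)} := by
    refine ⟨0, fun z hz => ?_⟩
    obtain ⟨q, hq, rfl⟩ := hz
    exact mul_nonneg (le_trans zero_le_one (hφ.ge_one q (hq₀.trans hq)))
      (Real.exp_pos _).le
  constructor
  · intro _
    exact csInf_le hbdd ⟨q₀, le_rfl, rfl⟩
  · intro hx
    have h1x : (1:ℝ) < 1 - x := by linarith
    have hq₀pos : (0:ℝ) < q₀ := lt_of_lt_of_le one_pos hq₀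
    set q := q₀ * (1 - x) with hqdef
    have hq : q₀ ≤ q := by
      have := le_mul_of_one_le_right hq₀pos.le h1x.le
      simpa [hqdef] using this
    refine csInf_le_of_le hbdd ⟨q, hq, rfl⟩ ?_
    have h1 : φ q ≤ q₀ ^ β * φ (1 - x) :=
      admissible_mul_le φ γ β hφ q₀ (1 - x) hq₀ h1x.le
    have h2 : Real.exp (-x / q) ≤ Real.exp (1 / q₀) := by
      apply Real.exp_le_exp.2
      have hqpos : (0:ℝ) < q := mul_pos hq₀pos (by linarith)
      rw [div_le_div_iff₀ hqpos hq₀pos, hqdef]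
      nlinarith
    calc φ q * Real.exp (-x / q) ≤ (q₀ ^ β * φ (1 - x)) * Real.exp (1 / q₀) := by
          apply mul_le_mul h1 h2 (Real.exp_pos _).le
          exact mul_nonneg (Real.rpow_nonneg hq₀pos.le β)
            (le_trans zero_le_one (hφ.ge_one _ h1x.le))
      _ = q₀ ^ β * Real.exp (1 / q₀) * φ (1 - x) := by ring
end

section
/- Let m ∈ ℕ, γ > 0 and β₁, …, β_m ≥ 0. Then the function φ(x) = x^γ ∏_{k=1}^m (log_k x)^{β_k}, defined for x ≥ 1, is admissible, where log₁ x = 1 + log⁺ x and log_k x = log₁(log_{k−1} x) for k > 1. -/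
open MeasureTheory Set ENNReal

/-- Smooth version of the iterated logarithm (no `max`), valid on `[1, ∞)`. -/
noncomputable def gkAux : ℕ → ℝ → ℝ
  | 0, x => x
  | n + 1, x => 1 + Real.log (gkAux n x)

lemma gkAux_ge_one (n : ℕ) {x : ℝ} (hx : 1 ≤ x) : 1 ≤ gkAux n x := by
  induction n with
  | zero => simpa [gkAux] using hx
  | succ n ih =>
    simp only [gkAux]
    have := Real.log_nonneg ih
    linarith

lemma gkAux_pos (n : ℕ) {x : ℝ} (hx : 1 ≤ x) : 0 < gkAux n x :=
  lt_of_lt_of_le one_pos (gkAux_ge_one n hx)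

lemma logk_eq_gkAux (n : ℕ) {x : ℝ} (hx : 1 ≤ x) : logk n x = gkAux n x := by
  induction n with
  | zero => rfl
  | succ n ih =>
    simp only [logk, gkAux, ih]
    rw [max_eq_left (Real.log_nonneg (gkAux_ge_one n hx))]

/-- Formal derivative of `gkAux`. -/
noncomputable def DkAux : ℕ → ℝ → ℝ
  | 0, _ => 1
  | n + 1, x => DkAux n x / gkAux n x

lemma gkAux_hasDeriv (n : ℕ) {x : ℝ} (hx : 1 ≤ x) :
    HasDerivWithinAt (gkAux n) (DkAux n x) (Set.Ici 1) x := by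
  induction n with
  | zero =>
    show HasDerivWithinAt (fun y : ℝ => y) 1 (Set.Ici (1:ℝ)) x
    exact hasDerivWithinAt_id x (Set.Ici (1:ℝ))
  | succ n ih =>
    have hpos : (0:ℝ) < gkAux n x := gkAux_pos n hx
    have h := (Real.hasDerivAt_log hpos.ne').comp_hasDerivWithinAt x ih
    have h2 : HasDerivWithinAt (fun y => 1 + Real.log (gkAux n y))
        ((gkAux n x)⁻¹ * DkAux n x) (Set.Ici 1) x := h.const_add 1
    have : (gkAux n x)⁻¹ * DkAux n x = DkAux (n+1) x := by
      simp [DkAux, div_eq_inv_mul]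
    rw [this] at h2
    exact h2.congr (fun y _ => by simp [gkAux]) (by simp [gkAux])

lemma DkAux_nonneg (n : ℕ) {x : ℝ} (hx : 1 ≤ x) : 0 ≤ DkAux n x := by
  induction n with
  | zero => simp [DkAux]
  | succ n ih => exact div_nonneg ih (gkAux_pos n hx).le

lemma DkAux_le (n : ℕ) {x : ℝ} (hx : 1 ≤ x) : DkAux (n+1) x ≤ 1 / x := by
  induction n with
  | zero => simp [DkAux, gkAux, one_div]
  | succ n ih =>
    have h1 : DkAux (n+2) x ≤ DkAux (n+1) x :=
      div_le_self (DkAux_nonneg (n+1) hx) (gkAux_ge_one (n+1) hx)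
    exact h1.trans ih

lemma loggk_concave (n : ℕ) :
    ConcaveOn ℝ (Set.Ici 1) (fun x => Real.log (gkAux n x)) := by
  induction n with
  | zero =>
    have h := strictConcaveOn_log_Ioi.concaveOn.subset
      (fun x (hx : x ∈ Set.Ici (1:ℝ)) => Set.mem_Ioi.2 (lt_of_lt_of_le one_pos hx)) (convex_Ici 1)
    exact h.congr (fun x _ => by simp [gkAux])
  | succ n ih =>
    refine ⟨convex_Ici 1, ?_⟩
    intro x hx y hy a b ha hb hab
    have hx1 : (1:ℝ) ≤ x := hx
    have hy1 : (1:ℝ) ≤ y := hy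
    have hLx : 0 ≤ Real.log (gkAux n x) := Real.log_nonneg (gkAux_ge_one n hx1)
    have hLy : 0 ≤ Real.log (gkAux n y) := Real.log_nonneg (gkAux_ge_one n hy1)
    have hz : a • x + b • y ∈ Set.Ici (1:ℝ) := (convex_Ici 1) hx hy ha hb hab
    have h1 : a • Real.log (gkAux n x) + b • Real.log (gkAux n y) ≤
        Real.log (gkAux n (a • x + b • y)) := ih.2 hx hy ha hb hab
    have hpx : (1:ℝ) + Real.log (gkAux n x) ∈ Set.Ioi (0:ℝ) := by
      simp only [Set.mem_Ioi]; linarith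
    have hpy : (1:ℝ) + Real.log (gkAux n y) ∈ Set.Ioi (0:ℝ) := by
      simp only [Set.mem_Ioi]; linarith
    have hlog := strictConcaveOn_log_Ioi.concaveOn.2 hpx hpy ha hb hab
    simp only [gkAux, smul_eq_mul] at *
    calc a * Real.log (1 + Real.log (gkAux n x)) + b * Real.log (1 + Real.log (gkAux n y))
        ≤ Real.log (a * (1 + Real.log (gkAux n x)) + b * (1 + Real.log (gkAux n y))) := hlog
      _ ≤ Real.log (1 + Real.log (gkAux n (a * x + b * y))) := by
          apply Real.log_le_log
          · nlinarith
          · nlinarith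

lemma log_phi_eq (m : ℕ) (γ : ℝ) (βv : ℕ → ℝ) {x : ℝ} (hx : 1 ≤ x) :
    Real.log (x ^ γ * ∏ k ∈ Finset.Icc 1 m, (logk k x) ^ (βv k)) =
      γ * Real.log x + ∑ k ∈ Finset.Icc 1 m, βv k * Real.log (gkAux k x) := by
  have hx0 : (0:ℝ) < x := lt_of_lt_of_le one_pos hx
  have hfac : ∀ k ∈ Finset.Icc 1 m, (logk k x) ^ (βv k) ≠ 0 := by
    intro k _
    rw [logk_eq_gkAux k hx]
    exact (Real.rpow_pos_of_pos (gkAux_pos k hx) _).ne'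
  rw [Real.log_mul (Real.rpow_pos_of_pos hx0 γ).ne' (Finset.prod_ne_zero_iff.2 hfac),
    Real.log_rpow hx0, Real.log_prod hfac]
  congr 1
  apply Finset.sum_congr rfl
  intro k _
  rw [logk_eq_gkAux k hx, Real.log_rpow (gkAux_pos k hx)]

lemma phi_pos (m : ℕ) (γ : ℝ) (βv : ℕ → ℝ) {x : ℝ} (hx : 1 ≤ x) :
    0 < x ^ γ * ∏ k ∈ Finset.Icc 1 m, (logk k x) ^ (βv k) := by
  apply mul_pos (Real.rpow_pos_of_pos (lt_of_lt_of_le one_pos hx) γ)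
  apply Finset.prod_pos
  intro k _
  rw [logk_eq_gkAux k hx]
  exact Real.rpow_pos_of_pos (gkAux_pos k hx) _

lemma gkAux_one (n : ℕ) : gkAux n 1 = 1 := by
  induction n with
  | zero => rfl
  | succ n ih => simp [gkAux, ih]

/-- For `m ∈ ℕ`, `γ > 0` and `β₁, …, β_m ≥ 0`, the function
`φ(x) = x^γ ∏_{k=1}^m (log_k x)^{β_k}` is admissible. -/
theorem stmt7 (m : ℕ) (γ : ℝ) (hγ : 0 < γ) (βv : ℕ → ℝ) (hβv : ∀ k, 0 ≤ βv k) :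
    ∃ γ' β' : ℝ, IsAdmissible
      (fun x : ℝ => x ^ γ * ∏ k ∈ Finset.Icc 1 m, (logk k x) ^ (βv k)) γ' β' := by
  have hβsum : 0 ≤ ∑ k ∈ Finset.Icc 1 m, βv k := Finset.sum_nonneg fun k _ => hβv k
  refine ⟨γ, γ + ∑ k ∈ Finset.Icc 1 m, βv k, ?_, ?_, ?_, hγ, by linarith, ?_⟩
  · -- φ 1 = 1
    have : ∀ k ∈ Finset.Icc 1 m, (logk k 1 : ℝ) ^ (βv k) = 1 := by
      intro k _
      rw [logk_eq_gkAux k le_rfl, gkAux_one, Real.one_rpow]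
    simp [Finset.prod_congr rfl this]
  · -- 1 ≤ φ x
    intro x hx
    have h1 : (1:ℝ) ≤ x ^ γ := Real.one_le_rpow hx hγ.le
    have h2 : (1:ℝ) ≤ ∏ k ∈ Finset.Icc 1 m, (logk k x) ^ (βv k) := by
      calc (1:ℝ) = ∏ _k ∈ Finset.Icc 1 m, (1:ℝ) := (Finset.prod_const_one).symm
        _ ≤ ∏ k ∈ Finset.Icc 1 m, (logk k x) ^ (βv k) := by
            apply Finset.prod_le_prod (fun _ _ => zero_le_one)
            intro k _
            rw [logk_eq_gkAux k hx]
            exact Real.one_le_rpow (gkAux_ge_one k hx) (hβv k)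
    nlinarith
  · -- log-concavity
    intro x y θ hx hy h0 h1
    have hz : (1:ℝ) ≤ θ * x + (1 - θ) * y := by nlinarith
    rw [log_phi_eq m γ βv hx, log_phi_eq m γ βv hy, log_phi_eq m γ βv hz]
    have hlog : θ * Real.log x + (1 - θ) * Real.log y ≤
        Real.log (θ * x + (1 - θ) * y) := by
      have h := (loggk_concave 0).2 (show x ∈ Set.Ici (1:ℝ) from hx)
        (show y ∈ Set.Ici (1:ℝ) from hy) h0 (show (0:ℝ) ≤ 1 - θ by linarith)
        (show θ + (1 - θ) = 1 by ring)
      simpa [gkAux, smul_eq_mul] using h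
    have hS : θ * (∑ k ∈ Finset.Icc 1 m, βv k * Real.log (gkAux k x)) +
        (1 - θ) * (∑ k ∈ Finset.Icc 1 m, βv k * Real.log (gkAux k y)) ≤
        ∑ k ∈ Finset.Icc 1 m, βv k * Real.log (gkAux k (θ * x + (1 - θ) * y)) := by
      rw [Finset.mul_sum, Finset.mul_sum, ← Finset.sum_add_distrib]
      apply Finset.sum_le_sum
      intro k _
      have h := (loggk_concave k).2 (show x ∈ Set.Ici (1:ℝ) from hx)
        (show y ∈ Set.Ici (1:ℝ) from hy) h0 (show (0:ℝ) ≤ 1 - θ by linarith)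
        (show θ + (1 - θ) = 1 by ring)
      simp only [smul_eq_mul] at h
      nlinarith [mul_le_mul_of_nonneg_left h (hβv k)]
    nlinarith [mul_le_mul_of_nonneg_left hlog hγ.le]
  · -- derivative bound
    refine ⟨fun x => (x ^ γ * ∏ k ∈ Finset.Icc 1 m, (logk k x) ^ (βv k)) *
      (γ / x + ∑ k ∈ Finset.Icc 1 m, βv k * DkAux (k+1) x), ?_⟩
    intro x hx
    have hx0 : (0:ℝ) < x := lt_of_lt_of_le one_pos hx
    have hφpos := phi_pos m γ βv hx
    have hφeq : ∀ y ∈ Set.Ici (1:ℝ),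
        y ^ γ * ∏ k ∈ Finset.Icc 1 m, (logk k y) ^ (βv k) =
          Real.exp (γ * Real.log y +
            ∑ k ∈ Finset.Icc 1 m, βv k * Real.log (gkAux k y)) := by
      intro y hy
      rw [← log_phi_eq m γ βv hy, Real.exp_log (phi_pos m γ βv hy)]
    have hFd : HasDerivWithinAt
        (fun y => γ * Real.log y +
          ∑ k ∈ Finset.Icc 1 m, βv k * Real.log (gkAux k y))
        (γ / x + ∑ k ∈ Finset.Icc 1 m, βv k * DkAux (k+1) x)
        (Set.Ici 1) x := by
      apply HasDerivWithinAt.add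
      · have h := ((Real.hasDerivAt_log hx0.ne').hasDerivWithinAt
          (s := Set.Ici (1:ℝ))).const_mul γ
        simpa [div_eq_mul_inv] using h
      · apply HasDerivWithinAt.fun_sum
        intro k _
        have hpos := gkAux_pos k hx
        have h := ((Real.hasDerivAt_log hpos.ne').comp_hasDerivWithinAt x
          (gkAux_hasDeriv k hx)).const_mul (βv k)
        have heq : βv k * ((gkAux k x)⁻¹ * DkAux k x) = βv k * DkAux (k+1) x := by
          simp [DkAux, div_eq_inv_mul]
        simpa [Function.comp, heq] using h
    have hD : HasDerivWithinAt
        (fun x : ℝ => x ^ γ * ∏ k ∈ Finset.Icc 1 m, (logk k x) ^ (βv k))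
        ((x ^ γ * ∏ k ∈ Finset.Icc 1 m, (logk k x) ^ (βv k)) *
          (γ / x + ∑ k ∈ Finset.Icc 1 m, βv k * DkAux (k+1) x))
        (Set.Ici 1) x := by
      have h2 := hFd.exp.congr hφeq (hφeq x hx)
      rwa [← hφeq x hx] at h2
    have hdiv : (x ^ γ * ∏ k ∈ Finset.Icc 1 m, (logk k x) ^ (βv k)) *
        (γ / x + ∑ k ∈ Finset.Icc 1 m, βv k * DkAux (k+1) x) /
        (x ^ γ * ∏ k ∈ Finset.Icc 1 m, (logk k x) ^ (βv k)) =
        γ / x + ∑ k ∈ Finset.Icc 1 m, βv k * DkAux (k+1) x :=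
      mul_div_cancel_left₀ _ hφpos.ne'
    refine ⟨hD, ?_, ?_⟩
    · rw [hdiv]
      have : 0 ≤ ∑ k ∈ Finset.Icc 1 m, βv k * DkAux (k+1) x :=
        Finset.sum_nonneg fun k _ => mul_nonneg (hβv k) (DkAux_nonneg (k+1) hx)
      linarith
    · rw [hdiv]
      have h1 : ∑ k ∈ Finset.Icc 1 m, βv k * DkAux (k+1) x ≤
          ∑ k ∈ Finset.Icc 1 m, βv k * (1 / x) :=
        Finset.sum_le_sum fun k _ =>
          mul_le_mul_of_nonneg_left (DkAux_le k hx) (hβv k)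
      have h2 : ∑ k ∈ Finset.Icc 1 m, βv k * (1 / x) =
          (∑ k ∈ Finset.Icc 1 m, βv k) / x := by
        rw [← Finset.sum_mul, mul_one_div]
      rw [add_div]
      linarith [h1, h2.le]
end
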